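/- Let I be a monomial ideal of R = K[x_1,…,x_n], let p be a monomial prime ideal of R, let t ≥ 1 be an integer, let α_1,…,α_s be positive integers, and let y_1,…,y_s be distinct variables of R such that p ∉ Ass(R/(I^t + (y_1^{α_1}))) and, for each i = 2,…,s, p ∉ Ass(R/((I^t : ∏_{j=1}^{i−1} y_j^{α_j}) + (y_i^{α_i}))). Then p ∈ Ass(R/I^t) if and only if p ∈ Ass(R/(I^t : ∏_{i=1}^s y_i^{α_i})). -/

import Mathlib

open MvPolynomial

/-- `I` is an ideal of `K[x_1,…,x_n]` generated by monomials. -/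
def IsMonomialIdeal {K : Type*} [Field K] {n : ℕ}
    (I : Ideal (MvPolynomial (Fin n) K)) : Prop :=
  ∃ S : Set (Fin n →₀ ℕ),
    I = Ideal.span ((fun e => MvPolynomial.monomial e (1 : K)) '' S)

section Helpers
variable {R : Type*} [CommRing R]

lemma my_colon_span_one (I : Ideal R) : I.colon (Ideal.span {(1 : R)}) = I := by
  ext r
  rw [Ideal.mem_colon_span_singleton, mul_one]

lemma my_colon_colon (I : Ideal R) (a b : R) :
    (I.colon (Ideal.span {a})).colon (Ideal.span {b}) = I.colon (Ideal.span {a * b}) := by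
  ext r
  rw [Ideal.mem_colon_span_singleton, Ideal.mem_colon_span_singleton, Ideal.mem_colon_span_singleton]
  constructor <;> intro h <;>
    · convert h using 1; ring
lemma my_ann_mk (I : Ideal R) (x : R) :
    (⊥ : Submodule R (R ⧸ I)).colon {Ideal.Quotient.mk I x} = I.colon (Ideal.span {x}) := by
  ext r
  rw [Submodule.mem_colon_singleton, Submodule.mem_bot, Ideal.mem_colon_span_singleton]
  have : r • (Ideal.Quotient.mk I x) = Ideal.Quotient.mk I (r * x) := rfl
  rw [this, Ideal.Quotient.eq_zero_iff_mem]

lemma my_step [IsNoetherianRing R] (J : Ideal R) (f : R) (p : Ideal R)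
    (hne : p ∉ associatedPrimes R (R ⧸ (J + Ideal.span {f}))) :
    p ∈ associatedPrimes R (R ⧸ J) ↔
      p ∈ associatedPrimes R (R ⧸ J.colon (Ideal.span {f})) := by
  constructor
  · intro hmem
    obtain ⟨hp, x, hx⟩ := isAssociatedPrime_iff.mp hmem
    obtain ⟨x, rfl⟩ := Ideal.Quotient.mk_surjective x
    by_cases hcase : ∃ a z, a * x ∉ J ∧ a * x - f * z ∈ J
    · obtain ⟨a, z, hax, haz⟩ := hcase
      refine isAssociatedPrime_iff.mpr ⟨hp, Ideal.Quotient.mk _ z, ?_⟩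
      rw [my_ann_mk, my_colon_colon]
      rw [my_ann_mk] at hx
      have ha : a ∉ p := by
        rw [hx, Ideal.mem_colon_span_singleton]; exact hax
      ext b
      rw [Ideal.mem_colon_span_singleton]
      constructor
      · intro hb
        have hb' : b * x ∈ J := by rwa [hx, Ideal.mem_colon_span_singleton] at hb
        have : b * (f * z) - b * (a * x) ∈ J := by
          have := J.mul_mem_left b (J.neg_mem haz)
          convert this using 1; ring
        have h2 : b * (a * x) ∈ J := by
          have := J.mul_mem_left a hb'
          convert this using 1; ring
        have := J.add_mem this h2
        simpa using this
      · intro hb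
        have h1 : b * a * x - b * (f * z) ∈ J := by
          have := J.mul_mem_left b haz
          convert this using 1; ring
        have h2 : b * a * x ∈ J := by simpa using J.add_mem h1 hb
        have hba : b * a ∈ p := by rw [hx, Ideal.mem_colon_span_singleton]; exact h2
        exact (hp.mem_or_mem hba).resolve_right ha
    · exfalso
      apply hne
      push_neg at hcase
      refine isAssociatedPrime_iff.mpr ⟨hp, Ideal.Quotient.mk _ x, ?_⟩
      rw [my_ann_mk]
      rw [my_ann_mk] at hx
      ext b
      rw [Ideal.mem_colon_span_singleton]
      constructor
      · intro hb
        exact Ideal.mem_sup_left (by rwa [hx, Ideal.mem_colon_span_singleton] at hb)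
      · intro hb
        rw [hx, Ideal.mem_colon_span_singleton]
        obtain ⟨j, hj, c, hc, hsum⟩ := Submodule.mem_sup.mp hb
        obtain ⟨z, rfl⟩ := Ideal.mem_span_singleton'.mp hc
        have hdiff : b * x - f * z ∈ J := by
          have h0 : b * x - (j + z * f) + j ∈ J := by
            rw [hsum]; simpa using hj
          convert h0 using 1; ring
        by_contra hbx
        exact hcase b z hbx hdiff
  · intro hmem
    obtain ⟨hp, z, hz⟩ := isAssociatedPrime_iff.mp hmem
    obtain ⟨w, rfl⟩ := Ideal.Quotient.mk_surjective z
    rw [my_ann_mk, my_colon_colon] at hz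
    exact isAssociatedPrime_iff.mpr ⟨hp, Ideal.Quotient.mk _ (f * w), by rw [my_ann_mk]; exact hz⟩

end Helpers

/-- Let `I` be a monomial ideal of `R = K[x_1,…,x_n]`,
`p = (x_i : i ∈ T)` a monomial prime ideal, `t ≥ 1`, `α_1,…,α_s ≥ 1`, and
`y_1,…,y_s` distinct variables such that `p ∉ Ass (R / (I^t + (y_1^{α_1})))`
and, for `i = 2,…,s`,
`p ∉ Ass (R / ((I^t : ∏_{j<i} y_j^{α_j}) + (y_i^{α_i})))`.  Then
`p ∈ Ass (R / I^t)` iff `p ∈ Ass (R / (I^t : ∏_{i=1}^s y_i^{α_i}))`. -/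
theorem associated_iff_colon_of_not_associated_steps
    {K : Type*} [Field K] {n s : ℕ}
    (I : Ideal (MvPolynomial (Fin n) K)) (hI : IsMonomialIdeal I)
    (T : Set (Fin n)) (t : ℕ) (ht : 1 ≤ t)
    (α : Fin s → ℕ) (hα : ∀ i, 1 ≤ α i)
    (y : Fin s → Fin n) (hy : Function.Injective y)
    (h1 : ∀ i : Fin s, (i : ℕ) = 0 →
      Ideal.span ((X : Fin n → MvPolynomial (Fin n) K) '' T) ∉
        associatedPrimes (MvPolynomial (Fin n) K)
          (MvPolynomial (Fin n) K ⧸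
            (I ^ t + Ideal.span {(X (y i) : MvPolynomial (Fin n) K) ^ α i})))
    (h2 : ∀ i : Fin s, 0 < (i : ℕ) →
      Ideal.span ((X : Fin n → MvPolynomial (Fin n) K) '' T) ∉
        associatedPrimes (MvPolynomial (Fin n) K)
          (MvPolynomial (Fin n) K ⧸
            ((I ^ t).colon (Ideal.span
                {∏ j ∈ Finset.univ.filter (fun j => j < i),
                  (X (y j) : MvPolynomial (Fin n) K) ^ α j}) +
              Ideal.span {(X (y i) : MvPolynomial (Fin n) K) ^ α i}))) :
    Ideal.span ((X : Fin n → MvPolynomial (Fin n) K) '' T) ∈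
        associatedPrimes (MvPolynomial (Fin n) K)
          (MvPolynomial (Fin n) K ⧸ I ^ t) ↔
      Ideal.span ((X : Fin n → MvPolynomial (Fin n) K) '' T) ∈
        associatedPrimes (MvPolynomial (Fin n) K)
          (MvPolynomial (Fin n) K ⧸
            (I ^ t).colon (Ideal.span
              {∏ i, (X (y i) : MvPolynomial (Fin n) K) ^ α i})) := by
  set R := MvPolynomial (Fin n) K
  set p : Ideal R := Ideal.span ((X : Fin n → R) '' T) with hpdef
  set P : ℕ → R := fun k =>
    ∏ j ∈ Finset.univ.filter (fun j : Fin s => (j : ℕ) < k),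
      (X (y j) : R) ^ α j with hP
  have key : ∀ k, k ≤ s →
      (p ∈ associatedPrimes R (R ⧸ I ^ t) ↔
        p ∈ associatedPrimes R (R ⧸ (I ^ t).colon (Ideal.span {P k}))) := by
    intro k
    induction k with
    | zero =>
      intro _
      have h0 : P 0 = 1 := by
        simp [hP]
      rw [h0, my_colon_span_one]
    | succ k ih =>
      intro hk1
      have hks : k < s := hk1
      set i : Fin s := ⟨k, hks⟩ with hi
      have hfilter : Finset.univ.filter (fun j : Fin s => (j : ℕ) < k + 1) =
          insert i (Finset.univ.filter (fun j : Fin s => (j : ℕ) < k)) := by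
        ext j
        simp only [Finset.mem_insert, Finset.mem_filter, Finset.mem_univ, true_and,
          Fin.ext_iff, hi]
        omega
      have hnotmem : i ∉ Finset.univ.filter (fun j : Fin s => (j : ℕ) < k) := by
        simp [hi]
      have hPsucc : P (k + 1) = P k * (X (y i) : R) ^ α i := by
        rw [hP]
        simp only
        rw [hfilter, Finset.prod_insert hnotmem, mul_comm]
      have hcolon : (I ^ t).colon (Ideal.span {P (k + 1)}) =
          ((I ^ t).colon (Ideal.span {P k})).colon
            (Ideal.span {(X (y i) : R) ^ α i}) := by
        rw [my_colon_colon, hPsucc]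
      have hne : p ∉ associatedPrimes R
          (R ⧸ ((I ^ t).colon (Ideal.span {P k}) +
            Ideal.span {(X (y i) : R) ^ α i})) := by
        rcases Nat.eq_zero_or_pos k with hk0 | hk0
        · have hP1 : P k = 1 := by subst hk0; simp [hP]
          rw [hP1, my_colon_span_one]
          exact h1 i hk0
        · have hfe : (Finset.univ.filter (fun j : Fin s => j < i)) =
              Finset.univ.filter (fun j : Fin s => (j : ℕ) < k) := by
            ext j
            simp [Fin.lt_def, hi]
          have := h2 i hk0
          rw [hfe] at this
          exact this
        done
      rw [ih (Nat.le_of_succ_le hk1), hcolon]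
      exact my_step _ _ _ hne
  have hfin : P s = ∏ i, (X (y i) : R) ^ α i := by
    rw [hP]
    simp only
    congr 1
    apply Finset.filter_true_of_mem
    intro j _
    exact j.isLt
  have := key s le_rfl
  rwa [hfin] at this
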